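/- arXiv:2402.13381 — 2 statements merged into one kernel-verified Lean document; each statement's English description precedes it below -/
import Mathlib

section
/- Let (T,G) be a graph-partitioned matrix with G = (V,E) a finite connected acyclic undirected graph, and suppose T admits a TSS representation on G with rank profile ρ'. Then for every directed edge e of G, ρ'(e) ≥ rank H_e, where H_e is the unit Hankel block associated with e. In other words, the TSS representation with rank profile ρ(e) = rank H_e is minimal. -/
open Matrix

attribute [local instance] Classical.propDecidable

namespace TSS

variable {F : Type*} [Field F] {V : Type*} [Fintype V] [DecidableEq V]

/-- The `(i,j)` block of a graph-partitioned matrix. -/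
def blockOf {m n : V → ℕ} (T : Matrix ((i : V) × Fin (m i)) ((j : V) × Fin (n j)) F)
    (i j : V) : Matrix (Fin (m i)) (Fin (n j)) F :=
  fun a b => T ⟨i, a⟩ ⟨j, b⟩

/-- The submatrix `T⟨A,B⟩` of a graph-partitioned matrix. -/
def subBlock {m n : V → ℕ} (T : Matrix ((i : V) × Fin (m i)) ((j : V) × Fin (n j)) F)
    (A B : Set V) :
    Matrix {p : (i : V) × Fin (m i) // p.1 ∈ A} {q : (j : V) × Fin (n j) // q.1 ∈ B} F :=
  T.submatrix (fun p => p.1) (fun q => q.1)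

/-- The Hankel block `T⟨Ā,A⟩` induced by `A`. -/
def hankelBlock {m n : V → ℕ} (T : Matrix ((i : V) × Fin (m i)) ((j : V) × Fin (n j)) F)
    (A : Set V) :
    Matrix {p : (i : V) × Fin (m i) // p.1 ∈ Aᶜ} {q : (j : V) × Fin (n j) // q.1 ∈ A} F :=
  subBlock T Aᶜ A

/-- The number of border edges of `A`: edges of `G` with one endpoint in `A` and the other
outside of `A` (each such undirected edge is counted once, via its orientation out of `A`). -/
noncomputable def edgeCount (G : SimpleGraph V) (A : Set V) : ℕ :=
  Nat.card {e : V × V // e.1 ∈ A ∧ e.2 ∉ A ∧ G.Adj e.1 e.2}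

/-- The vertex set of the connected component containing `i` after deleting the edge `{i,j}`. -/
def side (G : SimpleGraph V) (i j : V) : Set V :=
  {v | (G.deleteEdges {s(i, j)}).Reachable i v}

/-- The unit Hankel block associated with the directed edge `(i,j)`. -/
def unitHankel (G : SimpleGraph V) {m n : V → ℕ}
    (T : Matrix ((i : V) × Fin (m i)) ((j : V) × Fin (n j)) F) (i j : V) :=
  hankelBlock T (side G i j)

/-- `outChain Out Trans k i w j` is the product
`Out^i_{p_{ν−1}} · Trans^{p_{ν−1}}_{i,p_{ν−2}} ⋯ Trans^{k}_{p₁,j}` along the walk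
`w : k = p₀ − p₁ − ⋯ − p_ν = i`, with incoming edge `(j,k)`. -/
noncomputable def outChain {G : SimpleGraph V} {m : V → ℕ} {ρ : V → V → ℕ}
    (Out : ∀ k i : V, Matrix (Fin (m k)) (Fin (ρ i k)) F)
    (Trans : ∀ k i j : V, Matrix (Fin (ρ k i)) (Fin (ρ j k)) F) :
    ∀ (k i : V), G.Walk k i → ∀ j : V, Matrix (Fin (m i)) (Fin (ρ j k)) F
  | k, _, .nil, j => Out k j
  | k, _, .cons (v := k') _ w, j => outChain Out Trans k' _ w k * Trans k k' j

/-- `pathMatrix Inp Trans Out j i w` is the product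
`Out^i_{p_{ν−1}} · Trans^{p_{ν−1}}_{i,p_{ν−2}} ⋯ Trans^{p₁}_{p₂,j} · Inp^j_{p₁}` along the
walk `w : j = p₀ − p₁ − ⋯ − p_ν = i` (and junk `0` for the empty walk). -/
noncomputable def pathMatrix {G : SimpleGraph V} {m n : V → ℕ} {ρ : V → V → ℕ}
    (Inp : ∀ k j : V, Matrix (Fin (ρ k j)) (Fin (n k)) F)
    (Trans : ∀ k i j : V, Matrix (Fin (ρ k i)) (Fin (ρ j k)) F)
    (Out : ∀ k i : V, Matrix (Fin (m k)) (Fin (ρ i k)) F) :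
    ∀ (j i : V), G.Walk j i → Matrix (Fin (m i)) (Fin (n j)) F
  | _, _, .nil => 0
  | j, i, .cons (v := p1) _ w => outChain Out Trans p1 i w j * Inp j p1

/-- A TSS representation of the graph-partitioned matrix `T` on the tree `G`, with
output dimensions `m`, input dimensions `n` and rank profile `ρ` (only the values of the
generators and of `ρ` on (pairs of adjoining) directed edges of `G` are relevant). -/
structure TSSRepr (G : SimpleGraph V) (m n : V → ℕ) (ρ : V → V → ℕ)
    (T : Matrix ((i : V) × Fin (m i)) ((j : V) × Fin (n j)) F) where
  D : ∀ k : V, Matrix (Fin (m k)) (Fin (n k)) F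
  Inp : ∀ k j : V, Matrix (Fin (ρ k j)) (Fin (n k)) F
  Trans : ∀ k i j : V, Matrix (Fin (ρ k i)) (Fin (ρ j k)) F
  Out : ∀ k i : V, Matrix (Fin (m k)) (Fin (ρ i k)) F
  diag : ∀ i : V, blockOf T i i = D i
  offdiag : ∀ {i j : V}, i ≠ j → ∀ w : G.Walk j i, w.IsPath →
      blockOf T i j = pathMatrix Inp Trans Out j i w

/-- `transUp Trans i j k w prev` is the product `Trans^i_{j,p_{ν−1}} ⋯ Trans^{k}_{p₁,prev}`
along the walk `w : k = p₀ − p₁ − ⋯ − p_ν = i`, with `(i,j)` the outgoing edge at the end. -/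
noncomputable def transUp {G : SimpleGraph V} {ρ : V → V → ℕ}
    (Trans : ∀ k i j : V, Matrix (Fin (ρ k i)) (Fin (ρ j k)) F) (i j : V) :
    ∀ (k : V), G.Walk k i → ∀ prev : V, Matrix (Fin (ρ i j)) (Fin (ρ prev k)) F
  | _, .nil, prev => Trans i j prev
  | k, .cons (v := k') _ w, prev => transUp Trans i j k' w k * Trans k k' prev

/-- `inChain Inp Trans i j k w` is the product `Trans^i_{j,p_{ν−1}} ⋯ Trans^{p₁}_{p₂,k} · Inp^k_{p₁}`
along the walk `w : k = p₀ − p₁ − ⋯ − p_ν = i`, with `(i,j)` the outgoing edge at the end. -/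
noncomputable def inChain {G : SimpleGraph V} {n : V → ℕ} {ρ : V → V → ℕ}
    (Inp : ∀ k j : V, Matrix (Fin (ρ k j)) (Fin (n k)) F)
    (Trans : ∀ k i j : V, Matrix (Fin (ρ k i)) (Fin (ρ j k)) F) (i j : V) :
    ∀ (k : V), G.Walk k i → Matrix (Fin (ρ i j)) (Fin (n k)) F
  | _, .nil => Inp i j
  | k, .cons (v := k') _ w => transUp Trans i j k' w k * Inp k k'

theorem outChain_split {G : SimpleGraph V} {m : V → ℕ} {ρ : V → V → ℕ}
    (Out : ∀ k i : V, Matrix (Fin (m k)) (Fin (ρ i k)) F)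
    (Trans : ∀ k i j : V, Matrix (Fin (ρ k i)) (Fin (ρ j k)) F)
    {i j : V} (h : G.Adj i j) {p : V} (w2 : G.Walk j p) :
    ∀ (k : V) (w1 : G.Walk k i) (prev : V),
      outChain Out Trans k p (w1.append (.cons h w2)) prev
        = outChain Out Trans j p w2 i * transUp Trans i j k w1 prev := by
  intro k w1
  induction w1 with
  | nil =>
    intro prev
    simp only [SimpleGraph.Walk.nil_append, outChain, transUp]
  | cons ha w ih =>
    intro prev
    simp only [SimpleGraph.Walk.cons_append, outChain, transUp, ih, Matrix.mul_assoc]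

theorem pathMatrix_split {G : SimpleGraph V} {m n : V → ℕ} {ρ : V → V → ℕ}
    (Inp : ∀ k j : V, Matrix (Fin (ρ k j)) (Fin (n k)) F)
    (Trans : ∀ k i j : V, Matrix (Fin (ρ k i)) (Fin (ρ j k)) F)
    (Out : ∀ k i : V, Matrix (Fin (m k)) (Fin (ρ i k)) F)
    {i j : V} (h : G.Adj i j) {p : V} (w2 : G.Walk j p)
    (q : V) (w1 : G.Walk q i) :
    pathMatrix Inp Trans Out q p (w1.append (.cons h w2))
      = outChain Out Trans j p w2 i * inChain Inp Trans i j q w1 := by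
  cases w1 with
  | nil => simp only [SimpleGraph.Walk.nil_append, pathMatrix, inChain]
  | cons ha w =>
    simp only [SimpleGraph.Walk.cons_append, pathMatrix, inChain,
      outChain_split Out Trans h w2, Matrix.mul_assoc]

/-- minimality: if `T` admits a TSS representation on the tree `G` with
rank profile `ρ'`, then `ρ'(e) ≥ rank H_e` for every directed edge `e` of `G`. -/
theorem tss_minimality {F : Type*} [Field F] {V : Type*} [Fintype V] [DecidableEq V]
    (G : SimpleGraph V) (hG : G.IsTree) (m n : V → ℕ) (ρ' : V → V → ℕ)
    (T : Matrix ((i : V) × Fin (m i)) ((j : V) × Fin (n j)) F)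
    (hT : Nonempty (TSSRepr G m n ρ' T)) :
    ∀ i j : V, G.Adj i j → (unitHankel G T i j).rank ≤ ρ' i j := by
  obtain ⟨R⟩ := hT
  intro i j hij
  set A : Set V := side G i j with hA
  set G' : SimpleGraph V := G.deleteEdges {s(i, j)} with hG'
  -- the edge `{i,j}` is a bridge
  have hbridge : ¬ G'.Reachable i j := by
    have hb : G.IsBridge s(i, j) :=
      (SimpleGraph.isAcyclic_iff_forall_edge_isBridge.mp hG.IsAcyclic)
        (G.mem_edgeSet.mpr hij)
    exact SimpleGraph.isBridge_iff.mp hb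
  have hiA : i ∈ A := SimpleGraph.Reachable.refl i
  have hjA : j ∉ A := hbridge
  -- every vertex is reachable from `i` or from `j` in `G'`
  have reach_or : ∀ v : V, G'.Reachable i v ∨ G'.Reachable j v := by
    have key : ∀ (u v : V), G.Walk u v →
        (G'.Reachable i u ∨ G'.Reachable j u) →
        (G'.Reachable i v ∨ G'.Reachable j v) := by
      intro u v w
      induction w with
      | nil => exact id
      | @cons u b v hadj w ih =>
        intro hu
        apply ih
        by_cases hsb : s(u, b) = s(i, j)
        · rcases Sym2.eq_iff.mp hsb with ⟨rfl, rfl⟩ | ⟨rfl, rfl⟩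
          · exact Or.inr (SimpleGraph.Reachable.refl _)
          · exact Or.inl (SimpleGraph.Reachable.refl _)
        · have hadj' : G'.Adj u b := by
            rw [hG', SimpleGraph.deleteEdges_adj]
            exact ⟨hadj, by simpa using hsb⟩
          exact hu.imp (fun h => h.trans hadj'.reachable)
            (fun h => h.trans hadj'.reachable)
    intro v
    obtain ⟨w⟩ := hG.isConnected.preconnected i v
    exact key i v w (Or.inl (SimpleGraph.Reachable.refl i))
  -- choose, for every `q ∈ A`, a path from `q` to `i` inside `A`
  have hin : ∀ q : V, q ∈ A → ∃ w : G.Walk q i, w.IsPath ∧ ∀ v ∈ w.support, v ∈ A := by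
    intro q hq
    obtain ⟨w0⟩ := (hq : G'.Reachable i q).symm
    refine ⟨w0.bypass.mapLe (SimpleGraph.deleteEdges_le _), w0.bypass_isPath.mapLe _, ?_⟩
    intro v hv
    have hv' : v ∈ w0.bypass.support := by
      simpa [SimpleGraph.Walk.mapLe, SimpleGraph.Walk.support_map] using hv
    have : G'.Reachable q v := ⟨w0.bypass.takeUntil v hv'⟩
    exact (hq : G'.Reachable i q).trans this
  -- choose, for every `p ∉ A`, a path from `j` to `p` inside `Aᶜ`
  have hout : ∀ p : V, p ∉ A → ∃ w : G.Walk j p, w.IsPath ∧ ∀ v ∈ w.support, v ∉ A := by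
    intro p hp
    have hjp : G'.Reachable j p := (reach_or p).resolve_left hp
    obtain ⟨w0⟩ := hjp
    refine ⟨w0.bypass.mapLe (SimpleGraph.deleteEdges_le _), w0.bypass_isPath.mapLe _, ?_⟩
    intro v hv hvA
    have hv' : v ∈ w0.bypass.support := by
      simpa [SimpleGraph.Walk.mapLe, SimpleGraph.Walk.support_map] using hv
    have hjv : G'.Reachable j v := ⟨w0.bypass.takeUntil v hv'⟩
    exact hbridge ((hvA : G'.Reachable i v).trans hjv.symm)
  choose wq hwq1 hwq2 using hin
  choose wp hwp1 hwp2 using hout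
  -- the factorization of the unit Hankel block
  let L : Matrix {p : (i : V) × Fin (m i) // p.1 ∈ Aᶜ} (Fin (ρ' i j)) F :=
    fun pa c => outChain R.Out R.Trans j pa.1.1 (wp pa.1.1 pa.2) i pa.1.2 c
  let Rm : Matrix (Fin (ρ' i j)) {q : (j : V) × Fin (n j) // q.1 ∈ A} F :=
    fun c qb => inChain R.Inp R.Trans i j qb.1.1 (wq qb.1.1 qb.2) c qb.1.2
  have hfac : unitHankel G T i j = L * Rm := by
    ext pa qb
    obtain ⟨⟨p, a⟩, hp⟩ := pa
    obtain ⟨⟨q, b⟩, hq⟩ := qb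
    have hp' : p ∉ A := hp
    -- the combined walk is a path
    set W : G.Walk q p := (wq q hq).append (.cons hij (wp p hp')) with hW
    have hWsupp : W.support = (wq q hq).support ++ (wp p hp').support := by
      rw [hW, SimpleGraph.Walk.support_append]
      simp [SimpleGraph.Walk.support_cons]
    have hWpath : W.IsPath := by
      rw [SimpleGraph.Walk.isPath_def, hWsupp]
      refine List.Nodup.append ((hwq1 q hq).support_nodup) ((hwp1 p hp').support_nodup) ?_
      intro v hv1 hv2
      exact hwp2 p hp' v hv2 (hwq2 q hq v hv1)
    have hqp : p ≠ q := fun h => hp' (h ▸ hq)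
    have hblock : blockOf T p q
        = outChain R.Out R.Trans j p (wp p hp') i * inChain R.Inp R.Trans i j q (wq q hq) := by
      rw [R.offdiag hqp W hWpath, hW, pathMatrix_split]
    have : (unitHankel G T i j) ⟨⟨p, a⟩, hp⟩ ⟨⟨q, b⟩, hq⟩
        = blockOf T p q a b := rfl
    rw [this, hblock, Matrix.mul_apply, Matrix.mul_apply]
  rw [hfac]
  calc (L * Rm).rank ≤ L.rank := Matrix.rank_mul_le_left L Rm
    _ ≤ Fintype.card (Fin (ρ' i j)) := Matrix.rank_le_card_width L
    _ = ρ' i j := Fintype.card_fin _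

end TSS
end

section
/- Let T₁ ∈ F^{M×N} and T₂ ∈ F^{N×P}, with M = Σ_{i∈V} m_i, N = Σ_{i∈V} n_i, and P = Σ_{i∈V} p_i, be TSS matrices on the same finite connected acyclic undirected graph G = (V,E) with rank profiles ρ₁ and ρ₂ respectively (the column block partition of T₁ agreeing with the row block partition of T₂). Then T₃ = T₁T₂ admits a TSS representation on G with rank profile e ↦ ρ₁(e) + ρ₂(e). -/
open Matrix

attribute [local instance] Classical.propDecidable

namespace TSS

variable {F : Type*} [Field F] {V : Type*} [Fintype V] [DecidableEq V]

/-! ### Auxiliary machinery for the proof of `tss_mul` -/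

section Chains

variable {G : SimpleGraph V}

/-- Chain of transition matrices along a walk. -/
noncomputable def transChain {ρ : V → V → ℕ}
    (Trans : ∀ k i j : V, Matrix (Fin (ρ k i)) (Fin (ρ j k)) F) :
    ∀ (k b : V), G.Walk k b → ∀ c j : V, Matrix (Fin (ρ b c)) (Fin (ρ j k)) F
  | k, _, .nil, c, j => Trans k c j
  | k, _, .cons (v := k') _ w, c, j => transChain Trans k' _ w c k * Trans k k' j

/-- Chain of transition matrices along a walk, starting with an input matrix. -/
noncomputable def ctrlChain {n : V → ℕ} {ρ : V → V → ℕ}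
    (Inp : ∀ k j : V, Matrix (Fin (ρ k j)) (Fin (n k)) F)
    (Trans : ∀ k i j : V, Matrix (Fin (ρ k i)) (Fin (ρ j k)) F) :
    ∀ (l b : V), G.Walk l b → ∀ c : V, Matrix (Fin (ρ b c)) (Fin (n l)) F
  | l, _, .nil, c => Inp l c
  | l, _, .cons (v := q) _ w, c => transChain Trans q _ w c l * Inp l q

lemma outChain_append {m : V → ℕ} {ρ : V → V → ℕ}
    (Out : ∀ k i : V, Matrix (Fin (m k)) (Fin (ρ i k)) F)
    (Trans : ∀ k i j : V, Matrix (Fin (ρ k i)) (Fin (ρ j k)) F)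
    {k b : V} (w₁ : G.Walk k b) {c i : V} (hbc : G.Adj b c) (w₂ : G.Walk c i) :
    ∀ j : V, outChain Out Trans k i (w₁.append (SimpleGraph.Walk.cons hbc w₂)) j
      = outChain Out Trans c i w₂ b * transChain Trans k b w₁ c j := by
  induction w₁ with
  | nil =>
      intro j
      simp only [SimpleGraph.Walk.nil_append, outChain, transChain]
  | @cons u v' w' h w ih =>
      intro j
      rw [SimpleGraph.Walk.cons_append]
      simp only [outChain, transChain]
      rw [ih hbc u, Matrix.mul_assoc]

end Chains

section Tree

variable {G : SimpleGraph V}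

/-- The unique path between two vertices of a tree, as a walk. -/
noncomputable def thePath (hG : G.IsTree) (u v : V) : G.Walk u v :=
  (hG.existsUnique_path u v).choose

lemma thePath_isPath (hG : G.IsTree) (u v : V) : (thePath hG u v).IsPath :=
  (hG.existsUnique_path u v).choose_spec.1

lemma eq_thePath (hG : G.IsTree) {u v : V} (w : G.Walk u v) (hw : w.IsPath) :
    w = thePath hG u v :=
  (hG.existsUnique_path u v).choose_spec.2 w hw

lemma thePath_nil (hG : G.IsTree) (u : V) : thePath hG u u = SimpleGraph.Walk.nil :=
  (eq_thePath hG SimpleGraph.Walk.nil (SimpleGraph.Walk.IsPath.nil)).symm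

lemma thePath_reverse (hG : G.IsTree) (u v : V) :
    thePath hG v u = (thePath hG u v).reverse :=
  (eq_thePath hG _ ((thePath_isPath hG u v).reverse)).symm

lemma mem_side_iff {a b v : V} :
    v ∈ side G a b ↔ (G.deleteEdges {s(a, b)}).Reachable a v := Iff.rfl

lemma mem_side_self (a b : V) : a ∈ side G a b :=
  mem_side_iff.2 (SimpleGraph.Reachable.refl a)

lemma not_mem_side (hG : G.IsTree) {a b : V} (hab : G.Adj a b) : b ∉ side G a b := by
  rw [mem_side_iff]
  rintro ⟨w⟩
  have hsub : ∀ e ∈ w.toPath.1.edges, e ∈ G.edgeSet := by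
    intro e he
    have h := w.toPath.1.edges_subset_edgeSet he
    rw [SimpleGraph.edgeSet_deleteEdges] at h
    exact h.1
  have hnot : s(a, b) ∉ w.toPath.1.edges := by
    intro he
    have h := w.toPath.1.edges_subset_edgeSet he
    rw [SimpleGraph.edgeSet_deleteEdges] at h
    exact h.2 rfl
  have h1 : (w.toPath.1.transfer G hsub) = thePath hG a b :=
    eq_thePath hG _ (w.toPath.2.transfer hsub)
  have h2 : SimpleGraph.Walk.cons hab SimpleGraph.Walk.nil = thePath hG a b :=
    eq_thePath hG _ (by simp [SimpleGraph.Walk.cons_isPath_iff, hab.ne])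
  have h3 : (w.toPath.1.transfer G hsub).edges = [s(a, b)] := by
    rw [h1, ← h2]; simp
  rw [SimpleGraph.Walk.edges_transfer] at h3
  exact hnot (h3 ▸ List.mem_singleton_self _)

lemma side_disjoint (hG : G.IsTree) {a b : V} (hab : G.Adj a b) {v : V}
    (h1 : v ∈ side G a b) (h2 : v ∈ side G b a) : False := by
  rw [mem_side_iff] at h1 h2
  have h2' : (G.deleteEdges {s(a, b)}).Reachable b v := by
    rwa [show s(a, b) = s(b, a) from Sym2.eq_swap]
  exact not_mem_side hG hab (mem_side_iff.2 (h1.trans h2'.symm))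

lemma side_step (hG : G.IsTree) {a b : V} (hab : G.Adj a b) {u x : V} (hux : G.Adj u x)
    (hu : u ∈ side G a b ∨ u ∈ side G b a) : x ∈ side G a b ∨ x ∈ side G b a := by
  by_cases he : s(u, x) = s(a, b)
  · rw [Sym2.eq_iff] at he
    rcases he with ⟨rfl, rfl⟩ | ⟨rfl, rfl⟩
    · right; exact mem_side_self _ _
    · left; exact mem_side_self _ _
  · rcases hu with hu | hu
    · left
      have hadj : (G.deleteEdges {s(a, b)}).Adj u x := by
        rw [SimpleGraph.deleteEdges_adj]
        exact ⟨hux, by simpa using he⟩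
      exact mem_side_iff.2 ((mem_side_iff.1 hu).trans hadj.reachable)
    · right
      have hadj : (G.deleteEdges {s(b, a)}).Adj u x := by
        rw [SimpleGraph.deleteEdges_adj]
        refine ⟨hux, ?_⟩
        simp only [Set.mem_singleton_iff]
        intro hh
        exact he (hh.trans Sym2.eq_swap)
      exact mem_side_iff.2 ((mem_side_iff.1 hu).trans hadj.reachable)

lemma mem_side_or (hG : G.IsTree) {a b : V} (hab : G.Adj a b) (v : V) :
    v ∈ side G a b ∨ v ∈ side G b a := by
  have key : ∀ {u v' : V} (w : G.Walk u v'), u ∈ side G a b ∨ u ∈ side G b a →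
      v' ∈ side G a b ∨ v' ∈ side G b a := by
    intro u v' w
    induction w with
    | nil => exact id
    | cons h w ih => exact fun hu => ih (side_step hG hab h hu)
  obtain ⟨w⟩ := hG.isConnected.preconnected a v
  exact key w (Or.inl (mem_side_self a b))

lemma support_subset_side {b c i : V} (w : G.Walk c i)
    (hb : b ∉ w.support) : ∀ x ∈ w.support, x ∈ side G c b := by
  have hT : ∀ e ∈ w.edges, e ∈ (G.deleteEdges {s(c, b)}).edgeSet := by
    intro e he
    rw [SimpleGraph.edgeSet_deleteEdges]
    refine ⟨w.edges_subset_edgeSet he, ?_⟩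
    intro hmem
    rw [Set.mem_singleton_iff] at hmem
    subst hmem
    exact hb (w.snd_mem_support_of_mem_edges he)
  intro x hx
  have hx' : x ∈ (w.transfer _ hT).support := by
    rwa [SimpleGraph.Walk.support_transfer]
  exact mem_side_iff.2 ⟨(w.transfer _ hT).takeUntil x hx'⟩

lemma thePath_support_subset (hG : G.IsTree) {b c l : V} (hl : l ∈ side G b c) :
    ∀ x ∈ (thePath hG b l).support, x ∈ side G b c := by
  obtain ⟨w⟩ := mem_side_iff.1 hl
  have hT : ∀ e ∈ w.toPath.1.edges, e ∈ G.edgeSet := by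
    intro e he
    have h := w.toPath.1.edges_subset_edgeSet he
    rw [SimpleGraph.edgeSet_deleteEdges] at h
    exact h.1
  have heq : w.toPath.1.transfer G hT = thePath hG b l :=
    eq_thePath hG _ (w.toPath.2.transfer hT)
  intro x hx
  rw [← heq, SimpleGraph.Walk.support_transfer] at hx
  exact mem_side_iff.2 ⟨w.toPath.1.takeUntil x hx⟩

lemma thePath_cons (hG : G.IsTree) {b c l : V} (hbc : G.Adj b c) (hl : l ∈ side G c b) :
    thePath hG b l = SimpleGraph.Walk.cons hbc (thePath hG c l) := by
  have hb : b ∉ (thePath hG c l).support := by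
    intro hb
    exact side_disjoint hG hbc (mem_side_self b c) (thePath_support_subset hG hl b hb)
  exact (eq_thePath hG _ ((thePath_isPath hG c l).cons hb)).symm

lemma side_subset (hG : G.IsTree) {a b c : V} (hab : G.Adj a b) (hbc : G.Adj b c)
    (hac : a ≠ c) {l : V} (hl : l ∈ side G c b) : l ∈ side G b a := by
  obtain ⟨w⟩ := mem_side_iff.1 hl
  have hbw : b ∉ w.support := by
    intro hb
    exact side_disjoint hG hbc (mem_side_self b c) (mem_side_iff.2 ⟨w.takeUntil b hb⟩)
  have hT : ∀ e ∈ w.edges, e ∈ (G.deleteEdges {s(b, a)}).edgeSet := by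
    intro e he
    rw [SimpleGraph.edgeSet_deleteEdges]
    have h1 := w.edges_subset_edgeSet he
    rw [SimpleGraph.edgeSet_deleteEdges] at h1
    refine ⟨h1.1, ?_⟩
    intro hmem
    rw [Set.mem_singleton_iff] at hmem
    subst hmem
    exact hbw (w.fst_mem_support_of_mem_edges he)
  have hadj : (G.deleteEdges {s(b, a)}).Adj b c := by
    rw [SimpleGraph.deleteEdges_adj]
    refine ⟨hbc, ?_⟩
    simp only [Set.mem_singleton_iff, Sym2.eq_iff]
    rintro (⟨-, rfl⟩ | ⟨rfl, -⟩)
    · exact hac rfl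
    · exact hab.ne rfl
  exact mem_side_iff.2 ⟨SimpleGraph.Walk.cons hadj (w.transfer _ hT)⟩

end Tree

section Blocks

variable {q t r₁ r₂ s₁ s₂ : ℕ}

/-- Glue two matrices side by side. -/
noncomputable def rowBlk (A : Matrix (Fin q) (Fin r₁) F) (B : Matrix (Fin q) (Fin r₂) F) :
    Matrix (Fin q) (Fin (r₁ + r₂)) F :=
  (fromCols A B).submatrix id finSumFinEquiv.symm

/-- Glue two matrices on top of each other. -/
noncomputable def colBlk (A : Matrix (Fin r₁) (Fin q) F) (B : Matrix (Fin r₂) (Fin q) F) :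
    Matrix (Fin (r₁ + r₂)) (Fin q) F :=
  (fromRows A B).submatrix finSumFinEquiv.symm id

/-- A 2×2 block matrix. -/
noncomputable def sqBlk (P : Matrix (Fin r₁) (Fin s₁) F) (K : Matrix (Fin r₁) (Fin s₂) F)
    (Z : Matrix (Fin r₂) (Fin s₁) F) (Q : Matrix (Fin r₂) (Fin s₂) F) :
    Matrix (Fin (r₁ + r₂)) (Fin (s₁ + s₂)) F :=
  (fromBlocks P K Z Q).submatrix finSumFinEquiv.symm finSumFinEquiv.symm

lemma rowBlk_mul_colBlk (A : Matrix (Fin q) (Fin r₁) F) (B : Matrix (Fin q) (Fin r₂) F)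
    (C : Matrix (Fin r₁) (Fin t) F) (D : Matrix (Fin r₂) (Fin t) F) :
    rowBlk A B * colBlk C D = A * C + B * D := by
  rw [rowBlk, colBlk, submatrix_mul_equiv, fromCols_mul_fromRows, submatrix_id_id]

lemma rowBlk_mul_sqBlk (A : Matrix (Fin q) (Fin r₁) F) (B : Matrix (Fin q) (Fin r₂) F)
    (P : Matrix (Fin r₁) (Fin s₁) F) (K : Matrix (Fin r₁) (Fin s₂) F)
    (Z : Matrix (Fin r₂) (Fin s₁) F) (Q : Matrix (Fin r₂) (Fin s₂) F) :
    rowBlk A B * sqBlk P K Z Q = rowBlk (A * P + B * Z) (A * K + B * Q) := by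
  rw [rowBlk, sqBlk, submatrix_mul_equiv, fromCols_mul_fromBlocks, rowBlk]

end Blocks

section Product

variable {G : SimpleGraph V} {m n p : V → ℕ} {ρ₁ ρ₂ : V → V → ℕ}
variable {T₁ : Matrix ((i : V) × Fin (m i)) ((j : V) × Fin (n j)) F}
variable {T₂ : Matrix ((i : V) × Fin (n i)) ((j : V) × Fin (p j)) F}

/-- The observability factor of `T₂` at vertex `l`, over the directed edge `(a, b)`. -/
noncomputable def Obs2 (hG : G.IsTree) (R₂ : TSSRepr G n p ρ₂ T₂) (a b l : V) :
    Matrix (Fin (n l)) (Fin (ρ₂ a b)) F :=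
  outChain R₂.Out R₂.Trans b l (thePath hG b l) a

/-- The controllability factor of `T₁` at vertex `l`, over the directed edge `(b, c)`. -/
noncomputable def Ctrl1 (hG : G.IsTree) (R₁ : TSSRepr G m n ρ₁ T₁) (b c l : V) :
    Matrix (Fin (ρ₁ b c)) (Fin (n l)) F :=
  ctrlChain R₁.Inp R₁.Trans l b (thePath hG l b) c

/-- The second block of the output chain of the product representation. -/
noncomputable def Wmat (hG : G.IsTree)
    (T₁ : Matrix ((i : V) × Fin (m i)) ((j : V) × Fin (n j)) F)
    (R₂ : TSSRepr G n p ρ₂ T₂) (i a b : V) :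
    Matrix (Fin (m i)) (Fin (ρ₂ a b)) F :=
  ∑ l : V, if l ∈ side G b a then blockOf T₁ i l * Obs2 hG R₂ a b l else 0

/-- The mixing block of the transition matrices of the product representation. -/
noncomputable def Kmat (hG : G.IsTree) (R₁ : TSSRepr G m n ρ₁ T₁)
    (R₂ : TSSRepr G n p ρ₂ T₂) (b c a : V) :
    Matrix (Fin (ρ₁ b c)) (Fin (ρ₂ a b)) F :=
  ∑ l : V, if l ∈ side G b a ∧ l ∈ side G b c then
    Ctrl1 hG R₁ b c l * Obs2 hG R₂ a b l else 0

/-- The first block of the input matrices of the product representation. -/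
noncomputable def Smat (hG : G.IsTree) (R₁ : TSSRepr G m n ρ₁ T₁)
    (T₂ : Matrix ((i : V) × Fin (n i)) ((j : V) × Fin (p j)) F) (k c : V) :
    Matrix (Fin (ρ₁ k c)) (Fin (p k)) F :=
  ∑ l : V, if l ∈ side G k c then Ctrl1 hG R₁ k c l * blockOf T₂ l k else 0

/-- Output matrices of the product representation. -/
noncomputable def Out3 (hG : G.IsTree) (R₁ : TSSRepr G m n ρ₁ T₁)
    (R₂ : TSSRepr G n p ρ₂ T₂) (k q : V) :
    Matrix (Fin (m k)) (Fin (ρ₁ q k + ρ₂ q k)) F :=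
  rowBlk (R₁.Out k q) (Wmat hG T₁ R₂ k q k)

/-- Input matrices of the product representation. -/
noncomputable def Inp3 (hG : G.IsTree) (R₁ : TSSRepr G m n ρ₁ T₁)
    (R₂ : TSSRepr G n p ρ₂ T₂) (k c : V) :
    Matrix (Fin (ρ₁ k c + ρ₂ k c)) (Fin (p k)) F :=
  colBlk (Smat hG R₁ T₂ k c) (R₂.Inp k c)

/-- Transition matrices of the product representation. -/
noncomputable def Trans3 (hG : G.IsTree) (R₁ : TSSRepr G m n ρ₁ T₁)
    (R₂ : TSSRepr G n p ρ₂ T₂) (k i j : V) :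
    Matrix (Fin (ρ₁ k i + ρ₂ k i)) (Fin (ρ₁ j k + ρ₂ j k)) F :=
  sqBlk (R₁.Trans k i j) (Kmat hG R₁ R₂ k i j) 0 (R₂.Trans k i j)

lemma Obs2_cons (hG : G.IsTree) (R₂ : TSSRepr G n p ρ₂ T₂) {b c l : V}
    (hbc : G.Adj b c) (hl : l ∈ side G c b) (a : V) :
    Obs2 hG R₂ a b l = Obs2 hG R₂ b c l * R₂.Trans b c a := by
  rw [Obs2, thePath_cons hG hbc hl]
  simp only [outChain]
  rfl

lemma T1_factor (hG : G.IsTree) (R₁ : TSSRepr G m n ρ₁ T₁) {b c i l : V}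
    (hbc : G.Adj b c) (w : G.Walk c i)
    (hp : (SimpleGraph.Walk.cons hbc w).IsPath) (hl : l ∈ side G b c) :
    blockOf T₁ i l = outChain R₁.Out R₁.Trans c i w b * Ctrl1 hG R₁ b c l := by
  have hb : b ∉ w.support := ((SimpleGraph.Walk.cons_isPath_iff _ _).1 hp).2
  have hwp : w.IsPath := ((SimpleGraph.Walk.cons_isPath_iff _ _).1 hp).1
  have hwside : ∀ x ∈ w.support, x ∈ side G c b := support_subset_side w hb
  have hi : i ∈ side G c b := hwside i w.end_mem_support
  have hli : l ≠ i := fun hh => side_disjoint hG hbc hl (hh ▸ hi)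
  by_cases hlb : l = b
  · subst hlb
    rw [Ctrl1, thePath_nil]
    rw [R₁.offdiag (Ne.symm hli) (SimpleGraph.Walk.cons hbc w) hp]
    simp only [pathMatrix, ctrlChain]
  · have hpwsub : ∀ x ∈ (thePath hG l b).support, x ∈ side G b c := by
      intro x hx
      rw [thePath_reverse hG b l, SimpleGraph.Walk.support_reverse, List.mem_reverse] at hx
      exact thePath_support_subset hG hl x hx
    have hW : ((thePath hG l b).append (SimpleGraph.Walk.cons hbc w)).IsPath := by
      rw [SimpleGraph.Walk.isPath_def, SimpleGraph.Walk.support_append]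
      apply List.Nodup.append
      · exact (thePath_isPath hG l b).support_nodup
      · rw [SimpleGraph.Walk.support_cons, List.tail_cons]
        exact hwp.support_nodup
      · intro x hx hx'
        rw [SimpleGraph.Walk.support_cons, List.tail_cons] at hx'
        exact side_disjoint hG hbc (hpwsub x hx) (hwside x hx')
    have hfact := R₁.offdiag (Ne.symm hli) _ hW
    rw [hfact, Ctrl1]
    cases hq : thePath hG l b with
    | nil => exact absurd rfl hlb
    | cons h' p' =>
        rw [SimpleGraph.Walk.cons_append]
        simp only [pathMatrix, ctrlChain]
        rw [outChain_append R₁.Out R₁.Trans p' hbc w l, Matrix.mul_assoc]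

lemma T2_factor (hG : G.IsTree) (R₂ : TSSRepr G n p ρ₂ T₂) {j c l : V}
    (hjc : G.Adj j c) (hl : l ∈ side G c j) :
    blockOf T₂ l j = Obs2 hG R₂ j c l * R₂.Inp j c := by
  have hlj : l ≠ j := fun hh =>
    side_disjoint hG hjc (mem_side_self j c) (hh ▸ hl)
  have hpath : thePath hG j l = SimpleGraph.Walk.cons hjc (thePath hG c l) :=
    thePath_cons hG hjc hl
  rw [R₂.offdiag hlj (thePath hG j l) (thePath_isPath hG j l), hpath]
  simp only [pathMatrix]
  rfl

lemma Wmat_step (hG : G.IsTree) (R₁ : TSSRepr G m n ρ₁ T₁) (R₂ : TSSRepr G n p ρ₂ T₂)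
    {a b c i : V} (hab : G.Adj a b) (hbc : G.Adj b c) (hac : a ≠ c)
    (w' : G.Walk c i) (hp' : (SimpleGraph.Walk.cons hbc w').IsPath) :
    Wmat hG T₁ R₂ i a b
      = outChain R₁.Out R₁.Trans c i w' b * Kmat hG R₁ R₂ b c a
        + Wmat hG T₁ R₂ i b c * R₂.Trans b c a := by
  have hsplit : ∀ l : V,
      (if l ∈ side G b a then blockOf T₁ i l * Obs2 hG R₂ a b l else 0)
        = (if l ∈ side G b a ∧ l ∈ side G b c then blockOf T₁ i l * Obs2 hG R₂ a b l else 0)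
          + (if l ∈ side G c b then blockOf T₁ i l * Obs2 hG R₂ a b l else 0) := by
    intro l
    by_cases h1 : l ∈ side G c b
    · rw [if_pos (side_subset hG hab hbc hac h1), if_pos h1, if_neg, zero_add]
      rintro ⟨-, h2⟩
      exact side_disjoint hG hbc h2 h1
    · by_cases h2 : l ∈ side G b a
      · have h3 : l ∈ side G b c := (mem_side_or hG hbc l).resolve_right h1
        rw [if_pos h2, if_pos ⟨h2, h3⟩, if_neg h1, add_zero]
      · rw [if_neg h2, if_neg (fun hh => h2 hh.1), if_neg h1, add_zero]
  have hsum : Wmat hG T₁ R₂ i a b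
      = (∑ l : V, if l ∈ side G b a ∧ l ∈ side G b c then
            blockOf T₁ i l * Obs2 hG R₂ a b l else 0)
        + ∑ l : V, if l ∈ side G c b then blockOf T₁ i l * Obs2 hG R₂ a b l else 0 := by
    rw [Wmat, ← Finset.sum_add_distrib]
    exact Finset.sum_congr rfl fun l _ => hsplit l
  rw [hsum]
  congr 1
  · rw [Kmat, Matrix.mul_sum]
    refine Finset.sum_congr rfl fun l _ => ?_
    by_cases hl : l ∈ side G b a ∧ l ∈ side G b c
    · rw [if_pos hl, if_pos hl, T1_factor hG R₁ hbc w' hp' hl.2, Matrix.mul_assoc]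
    · rw [if_neg hl, if_neg hl, Matrix.mul_zero]
  · rw [Wmat, Matrix.sum_mul]
    refine Finset.sum_congr rfl fun l _ => ?_
    by_cases hl : l ∈ side G c b
    · rw [if_pos hl, if_pos hl, Obs2_cons hG R₂ hbc hl a, Matrix.mul_assoc]
    · rw [if_neg hl, if_neg hl, Matrix.zero_mul]

lemma outChain3_eq (hG : G.IsTree) (R₁ : TSSRepr G m n ρ₁ T₁) (R₂ : TSSRepr G n p ρ₂ T₂)
    {b i : V} (w : G.Walk b i) :
    ∀ {a : V} (hab : G.Adj a b), (SimpleGraph.Walk.cons hab w).IsPath →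
      outChain (Out3 hG R₁ R₂) (Trans3 hG R₁ R₂) b i w a
        = rowBlk (outChain R₁.Out R₁.Trans b i w a) (Wmat hG T₁ R₂ i a b) := by
  induction w with
  | nil =>
      intro a hab _
      simp only [outChain, Out3]
  | @cons b c i h w' ih =>
      intro a hab hp
      have hp' : (SimpleGraph.Walk.cons h w').IsPath :=
        ((SimpleGraph.Walk.cons_isPath_iff _ _).1 hp).1
      have hac : a ≠ c := by
        intro hh
        have := ((SimpleGraph.Walk.cons_isPath_iff _ _).1 hp).2
        rw [SimpleGraph.Walk.support_cons] at this
        exact this (List.mem_cons_of_mem _ (hh ▸ w'.start_mem_support))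
      simp only [outChain]
      rw [ih h hp', Trans3, rowBlk_mul_sqBlk, Matrix.mul_zero, add_zero,
        Wmat_step hG R₁ R₂ hab h hac w' hp']

lemma blockOf_mul (i j : V) :
    blockOf (T₁ * T₂) i j = ∑ l : V, blockOf T₁ i l * blockOf T₂ l j := by
  ext a b
  simp only [blockOf, Matrix.mul_apply, Matrix.sum_apply]
  rw [← Finset.univ_sigma_univ, Finset.sum_sigma]

end Product

/-- TSS product: if `T₁ ∈ F^{M×N}` and `T₂ ∈ F^{N×P}` are TSS matrices on
the same tree `G` with rank profiles `ρ₁, ρ₂` (the column partition of `T₁` agreeing with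
the row partition of `T₂`), then `T₁T₂` admits a TSS representation on `G` with rank
profile `e ↦ ρ₁(e) + ρ₂(e)`. -/
theorem tss_mul {F : Type*} [Field F] {V : Type*} [Fintype V] [DecidableEq V]
    (G : SimpleGraph V) (hG : G.IsTree) (m n p : V → ℕ) (ρ₁ ρ₂ : V → V → ℕ)
    (T₁ : Matrix ((i : V) × Fin (m i)) ((j : V) × Fin (n j)) F)
    (T₂ : Matrix ((i : V) × Fin (n i)) ((j : V) × Fin (p j)) F)
    (h₁ : Nonempty (TSSRepr G m n ρ₁ T₁)) (h₂ : Nonempty (TSSRepr G n p ρ₂ T₂)) :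
    Nonempty (TSSRepr G m p (fun i j => ρ₁ i j + ρ₂ i j) (T₁ * T₂)) := by
  obtain ⟨R₁⟩ := h₁
  obtain ⟨R₂⟩ := h₂
  refine ⟨⟨fun k => blockOf (T₁ * T₂) k k, Inp3 hG R₁ R₂, Trans3 hG R₁ R₂, Out3 hG R₁ R₂,
    fun i => rfl, ?_⟩⟩
  intro i j hij w hw
  cases w with
  | nil => exact absurd rfl hij
  | @cons j c i hjc w' =>
    simp only [pathMatrix]
    rw [outChain3_eq hG R₁ R₂ w' hjc hw, Inp3, rowBlk_mul_colBlk, blockOf_mul]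
    have hsplit : ∀ l : V,
        blockOf T₁ i l * blockOf T₂ l j
          = (if l ∈ side G j c then blockOf T₁ i l * blockOf T₂ l j else 0)
            + (if l ∈ side G c j then blockOf T₁ i l * blockOf T₂ l j else 0) := by
      intro l
      rcases mem_side_or hG hjc l with h | h
      · rw [if_pos h, if_neg (fun h' => side_disjoint hG hjc h h'), add_zero]
      · rw [if_neg (fun h' => side_disjoint hG hjc h' h), if_pos h, zero_add]
    have hsum : (∑ l : V, blockOf T₁ i l * blockOf T₂ l j)
        = (∑ l : V, if l ∈ side G j c then blockOf T₁ i l * blockOf T₂ l j else 0)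
          + ∑ l : V, if l ∈ side G c j then blockOf T₁ i l * blockOf T₂ l j else 0 := by
      rw [← Finset.sum_add_distrib]
      exact Finset.sum_congr rfl fun l _ => hsplit l
    rw [hsum]
    congr 1
    · rw [Smat, Matrix.mul_sum]
      refine Finset.sum_congr rfl fun l _ => ?_
      by_cases hl : l ∈ side G j c
      · rw [if_pos hl, if_pos hl, T1_factor hG R₁ hjc w' hw hl, Matrix.mul_assoc]
      · rw [if_neg hl, if_neg hl, Matrix.mul_zero]
    · rw [Wmat, Matrix.sum_mul]
      refine Finset.sum_congr rfl fun l _ => ?_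
      by_cases hl : l ∈ side G c j
      · rw [if_pos hl, if_pos hl, T2_factor hG R₂ hjc hl, Matrix.mul_assoc]
      · rw [if_neg hl, if_neg hl, Matrix.zero_mul]


end TSS
end
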